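/- For every ordinal α with 1 ≤ α < ω₁ there exists a family ℋ ⊆ 𝒫(ℕ) that is Wadge complete for D_α(𝒫(ℕ)) (ℋ ∈ D_α(𝒫(ℕ)) and every member of D_α(𝒫(ℕ)) is Wadge reducible to ℋ) but not one-to-one Wadge complete: some 𝒳 ∈ D_α(𝒫(ℕ)) admits no injective continuous reduction to ℋ. -/

import Mathlib

open Topology

/-- The Scott topology on 𝒫(ℕ), generated by the basic open sets
`B_A = {X : A ⊆ X}` for finite `A ⊆ ℕ`. -/
def ScottPN : TopologicalSpace (Set ℕ) :=
  TopologicalSpace.generateFrom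
    {O : Set (Set ℕ) | ∃ A : Set ℕ, A.Finite ∧ O = {X : Set ℕ | A ⊆ X}}

/-- An ordinal is even if its canonical decomposition `λ + n`
(`λ` zero or a limit, `n < ω`) has `n` even. -/
def OrdEven (o : Ordinal) : Prop :=
  ∃ (l : Ordinal) (n : ℕ), (l = 0 ∨ Order.IsSuccLimit l) ∧ o = l + 2 * n

/-- Two ordinals have the same parity. -/
def SameParity (a b : Ordinal) : Prop := OrdEven a ↔ OrdEven b

/-- The Hausdorff difference operation `D_α`. -/
def DOp {E : Type*} (α : Ordinal) (U : Ordinal → Set E) : Set E :=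
  ⋃ β ∈ {β : Ordinal | β < α ∧ ¬ SameParity β α}, (U β \ ⋃ γ ∈ Set.Iio β, U γ)

/-- Membership in the Hausdorff difference class `D_α(E)`. -/
def MemD {E : Type*} (t : TopologicalSpace E) (α : Ordinal) (A : Set E) : Prop :=
  ∃ U : Ordinal → Set E, (∀ β < α, IsOpen[t] (U β)) ∧ A = DOp α U
/-- Wadge reducibility between families of subsets of ℕ (Scott topology). -/
def WadgeLe (A B : Set (Set ℕ)) : Prop :=
  ∃ f : Set ℕ → Set ℕ, Continuous[ScottPN, ScottPN] f ∧ A = f ⁻¹' B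

/-! ### Auxiliary lemmas on ordinal parity -/

private lemma ordDecomp (o : Ordinal) :
    ∃ (l : Ordinal) (m : ℕ), (l = 0 ∨ Order.IsSuccLimit l) ∧ o = l + (m : Ordinal) := by
  obtain ⟨m, hm⟩ := Ordinal.lt_omega0.mp (Ordinal.mod_lt o Ordinal.omega0_ne_zero)
  refine ⟨Ordinal.omega0 * (o / Ordinal.omega0), m, ?_, ?_⟩
  · rcases eq_or_ne (o / Ordinal.omega0) 0 with h | h
    · left; simp [h]
    · right
      exact Ordinal.isSuccLimit_mul_left Ordinal.isSuccLimit_omega0 (pos_iff_ne_zero.mpr h)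
  · rw [← hm]
    exact (Ordinal.div_add_mod o Ordinal.omega0).symm

private lemma limit_add_nat_lt {l l' : Ordinal} (hl' : l' = 0 ∨ Order.IsSuccLimit l')
    (h : l < l') (m : ℕ) : l + (m : Ordinal) < l' := by
  rcases hl' with rfl | hl'
  · exact absurd h (by simp : ¬ l < 0)
  · induction m with
    | zero => simpa using h
    | succ k ih =>
      have h2 : Order.succ (l + (k : Ordinal)) < l' := hl'.succ_lt ih
      have h3 : ((k + 1 : ℕ) : Ordinal) = (k : Ordinal) + 1 := by
        push_cast; rfl
      rw [h3, ← add_assoc, Ordinal.add_one_eq_succ]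
      exact h2

private lemma decompUnique {l l' : Ordinal} {m m' : ℕ} (hl : l = 0 ∨ Order.IsSuccLimit l)
    (hl' : l' = 0 ∨ Order.IsSuccLimit l') (h : l + (m : Ordinal) = l' + (m' : Ordinal)) :
    l = l' ∧ m = m' := by
  have hll : l = l' := by
    rcases lt_trichotomy l l' with hlt | he | hlt
    · have h5 := limit_add_nat_lt hl' hlt m
      rw [h] at h5
      exact absurd h5 (not_lt.mpr le_self_add)
    · exact he
    · have h5 := limit_add_nat_lt hl hlt m'
      rw [← h] at h5
      exact absurd h5 (not_lt.mpr le_self_add)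
  subst hll
  refine ⟨rfl, ?_⟩
  have h6 := (add_right_inj l).mp h
  exact_mod_cast h6

private lemma two_mul_cast (k : ℕ) : (2 : Ordinal) * (k : Ordinal) = ((2 * k : ℕ) : Ordinal) := by
  rw [Ordinal.natCast_mul]
  norm_num

private lemma parity_flip (o : Ordinal) : ¬ (OrdEven o ↔ OrdEven (o + 1)) := by
  obtain ⟨l, m, hl, rfl⟩ := ordDecomp o
  intro hiff
  rcases Nat.even_or_odd m with he | ho
  · obtain ⟨n, hn⟩ := he
    have h1 : OrdEven (l + (m : Ordinal)) := by
      refine ⟨l, n, hl, ?_⟩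
      rw [two_mul_cast n]
      congr 1
      exact_mod_cast (by omega : m = 2 * n)
    obtain ⟨l', n', hl', he'⟩ := hiff.mp h1
    rw [two_mul_cast n'] at he'
    have he'' : l + ((m + 1 : ℕ) : Ordinal) = l' + ((2 * n' : ℕ) : Ordinal) := by
      rw [Nat.cast_add, Nat.cast_one, ← add_assoc]
      exact he'
    obtain ⟨-, hbad⟩ := decompUnique hl hl' he''
    omega
  · obtain ⟨n, hn⟩ := ho
    have h1 : OrdEven (l + (m : Ordinal) + 1) := by
      refine ⟨l, n + 1, hl, ?_⟩
      rw [two_mul_cast (n + 1)]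
      have h4 : l + (m : Ordinal) + 1 = l + ((m + 1 : ℕ) : Ordinal) := by
        rw [Nat.cast_add, Nat.cast_one, add_assoc]
      rw [h4]
      congr 1
      exact_mod_cast (by omega : m + 1 = 2 * (n + 1))
    obtain ⟨l', n', hl', he'⟩ := hiff.mpr h1
    rw [two_mul_cast n'] at he'
    obtain ⟨-, hbad⟩ := decompUnique hl hl' he'
    omega

/-! ### Auxiliary lemmas on the Scott topology -/

private lemma isOpen_scott_iff {O : Set (Set ℕ)} :
    IsOpen[ScottPN] O ↔ TopologicalSpace.GenerateOpen
      {O : Set (Set ℕ) | ∃ A : Set ℕ, A.Finite ∧ O = {X : Set ℕ | A ⊆ X}} O :=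
  Iff.rfl

private lemma isOpen_memSet (n : ℕ) : IsOpen[ScottPN] {S : Set ℕ | n ∈ S} := by
  rw [isOpen_scott_iff]
  have h : {S : Set ℕ | n ∈ S} = {X : Set ℕ | {n} ⊆ X} := by
    ext S; simp
  rw [h]
  exact TopologicalSpace.GenerateOpen.basic _ ⟨{n}, Set.finite_singleton n, rfl⟩

private lemma scott_upClosed {O : Set (Set ℕ)} (hO : IsOpen[ScottPN] O) :
    ∀ {X Y : Set ℕ}, X ∈ O → X ⊆ Y → Y ∈ O := by
  rw [isOpen_scott_iff] at hO
  induction hO with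
  | basic s hs =>
    obtain ⟨A, _, rfl⟩ := hs
    intro X Y hX hXY
    exact hX.trans hXY
  | univ => intro X Y _ _; trivial
  | inter s t _ _ ihs iht =>
    intro X Y hX hXY
    exact ⟨ihs hX.1 hXY, iht hX.2 hXY⟩
  | sUnion S _ ih =>
    intro X Y hX hXY
    obtain ⟨s, hs, hXs⟩ := hX
    exact ⟨s, hs, ih s hs hXs hXY⟩

private lemma scott_mono {f : Set ℕ → Set ℕ} (hf : Continuous[ScottPN, ScottPN] f)
    {X Y : Set ℕ} (hXY : X ⊆ Y) : f X ⊆ f Y := by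
  intro n hn
  have hop : IsOpen[ScottPN] (f ⁻¹' {S : Set ℕ | n ∈ S}) :=
    @Continuous.isOpen_preimage _ _ ScottPN ScottPN f hf _ (isOpen_memSet n)
  exact scott_upClosed hop hn hXY

private lemma scott_continuous_of {f : Set ℕ → Set ℕ}
    (h : ∀ n : ℕ, IsOpen[ScottPN] {X : Set ℕ | n ∈ f X}) :
    Continuous[ScottPN, ScottPN] f := by
  letI : TopologicalSpace (Set ℕ) := ScottPN
  show Continuous[ScottPN, TopologicalSpace.generateFrom _] f
  apply continuous_generateFrom_iff.mpr
  rintro O ⟨A, hA, rfl⟩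
  have he : f ⁻¹' {X : Set ℕ | A ⊆ X} = ⋂ n ∈ A, {X : Set ℕ | n ∈ f X} := by
    ext X; simp [Set.subset_def]
  rw [he]
  exact hA.isOpen_biInter (fun n _ => h n)

/-! ### Auxiliary lemmas on `DOp` -/

private lemma mem_DOp {E : Type*} {α : Ordinal} {U : Ordinal → Set E} {x : E} :
    x ∈ DOp α U ↔ ∃ β, β < α ∧ ¬ SameParity β α ∧ x ∈ U β ∧ ∀ γ < β, x ∉ U γ := by
  simp only [DOp, Set.mem_iUnion, Set.mem_diff, Set.mem_setOf_eq, Set.mem_Iio,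
    exists_prop, not_exists]
  constructor
  · rintro ⟨β, ⟨h1, h2⟩, h3, h4⟩
    refine ⟨β, h1, h2, h3, fun γ hγ hx => ?_⟩
    exact h4 γ ⟨hγ, hx⟩
  · rintro ⟨β, h1, h2, h3, h4⟩
    refine ⟨β, ⟨h1, h2⟩, h3, fun γ hγ => ?_⟩
    exact h4 γ hγ.1 hγ.2

private lemma DOp_layer {E : Type*} {α : Ordinal} {U : Ordinal → Set E} {x : E} {δ : Ordinal}
    (hδ : δ < α) (hx : x ∈ U δ) (hlow : ∀ γ < δ, x ∉ U γ) :
    (x ∈ DOp α U ↔ ¬ SameParity δ α) := by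
  rw [mem_DOp]
  constructor
  · rintro ⟨β, hβα, hpar, hxβ, hβlow⟩
    rcases lt_trichotomy β δ with h | h | h
    · exact absurd hxβ (hlow β h)
    · rwa [h] at hpar
    · exact absurd hx (hβlow δ h)
  · intro h
    exact ⟨δ, hδ, h, hx, hlow⟩

private lemma DOp_congr {E : Type*} {α : Ordinal} {U V : Ordinal → Set E}
    (h : ∀ β < α, U β = V β) : DOp α U = DOp α V := by
  ext x
  rw [mem_DOp, mem_DOp]
  constructor
  · rintro ⟨β, h1, h2, h3, h4⟩
    refine ⟨β, h1, h2, by rwa [← h β h1], fun γ hγ => ?_⟩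
    rw [← h γ (hγ.trans h1)]
    exact h4 γ hγ
  · rintro ⟨β, h1, h2, h3, h4⟩
    refine ⟨β, h1, h2, by rwa [h β h1], fun γ hγ => ?_⟩
    rw [h γ (hγ.trans h1)]
    exact h4 γ hγ

private lemma preimage_DOp {E F : Type*} (g : E → F) (α : Ordinal) (U : Ordinal → Set F) :
    g ⁻¹' (DOp α U) = DOp α (fun β => g ⁻¹' (U β)) := by
  ext x
  rw [Set.mem_preimage, mem_DOp, mem_DOp]
  exact Iff.rfl

/-! ### The main theorem -/

/-- For every countable ordinal `α ≥ 1` there is a family which is Wadge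
complete for `D_α(𝒫(ℕ))` but not one-to-one Wadge complete. -/
theorem exists_wadge_complete_not_one_one_complete
    (α : Ordinal) (h1 : 1 ≤ α) (h2 : α.card ≤ Cardinal.aleph0) :
    ∃ H : Set (Set ℕ), MemD ScottPN α H ∧
      (∀ A : Set (Set ℕ), MemD ScottPN α A → WadgeLe A H) ∧
      ∃ A : Set (Set ℕ), MemD ScottPN α A ∧
        ¬ ∃ f : Set ℕ → Set ℕ, Continuous[ScottPN, ScottPN] f ∧
            Function.Injective f ∧ A = f ⁻¹' H := by
  classical
  letI : TopologicalSpace (Set ℕ) := ScottPN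
  have hα0 : (0 : Ordinal) < α := lt_of_lt_of_le zero_lt_one h1
  -- a coding of the ordinals below α by odd natural numbers
  have hcnt : Countable (Set.Iio α) := by
    rw [← Cardinal.mk_le_aleph0_iff, Ordinal.mk_Iio_ordinal]
    calc Cardinal.lift α.card ≤ Cardinal.lift Cardinal.aleph0 := Cardinal.lift_le.mpr h2
      _ = Cardinal.aleph0 := Cardinal.lift_aleph0
  obtain ⟨e⟩ := nonempty_embedding_nat (Set.Iio α)
  set cA : Ordinal → ℕ := fun β => if h : β < α then 2 * e ⟨β, h⟩ + 1 else 0 with hcA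
  have cA_inj : ∀ {β γ : Ordinal}, β < α → γ < α → cA β = cA γ → β = γ := by
    intro β γ hβ hγ h
    rw [hcA] at h
    simp only [dif_pos hβ, dif_pos hγ] at h
    have h5 : e ⟨β, hβ⟩ = e ⟨γ, hγ⟩ := by omega
    have h6 := e.injective h5
    exact Subtype.ext_iff.mp h6
  have cA_odd : ∀ {β : Ordinal}, β < α → cA β % 2 = 1 := by
    intro β hβ
    rw [hcA]
    simp only [dif_pos hβ]
    omega
  -- the witnessing families
  set V : Ordinal → Set (Set ℕ) := fun β => {S | ∃ γ, γ ≤ β ∧ γ < α ∧ cA γ ∈ S} with hV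
  set J : Set (Set ℕ) := {S | ∃ n ∈ S, ∀ γ, γ < α → cA γ ≠ n} with hJ
  set W : Ordinal → Set (Set ℕ) := fun β => J ∪ V β with hW
  have hVopen : ∀ β, IsOpen[ScottPN] (V β) := by
    intro β
    have h : V β = ⋃ γ ∈ {γ : Ordinal | γ ≤ β ∧ γ < α}, {S : Set ℕ | cA γ ∈ S} := by
      ext S
      simp only [hV, Set.mem_setOf_eq, Set.mem_iUnion, exists_prop]
      tauto
    rw [h]
    exact isOpen_biUnion (fun γ _ => isOpen_memSet _)
  have hJopen : IsOpen[ScottPN] J := by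
    have h : J = ⋃ n ∈ {n : ℕ | ∀ γ, γ < α → cA γ ≠ n}, {S : Set ℕ | n ∈ S} := by
      ext S
      simp only [hJ, Set.mem_setOf_eq, Set.mem_iUnion, exists_prop]
      tauto
    rw [h]
    exact isOpen_biUnion (fun n _ => isOpen_memSet _)
  have hWopen : ∀ β, IsOpen[ScottPN] (W β) := fun β => hJopen.union (hVopen β)
  refine ⟨DOp α W, ⟨W, fun β _ => hWopen β, rfl⟩, ?_, DOp α V, ⟨V, fun β _ => hVopen β, rfl⟩, ?_⟩
  · -- completeness
    rintro A₀ ⟨U, hUo, rfl⟩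
    set Ub : Ordinal → Set (Set ℕ) := fun β => ⋃ γ ∈ {γ : Ordinal | γ ≤ β ∧ γ < α}, U γ with hUb
    have hUbopen : ∀ β, IsOpen[ScottPN] (Ub β) :=
      fun β => isOpen_biUnion (fun γ hγ => hUo γ hγ.2)
    have hUbmem : ∀ {x : Set ℕ} {β : Ordinal}, x ∈ Ub β ↔ ∃ γ, γ ≤ β ∧ γ < α ∧ x ∈ U γ := by
      intro x β
      simp only [hUb, Set.mem_iUnion, Set.mem_setOf_eq, exists_prop]
      tauto
    set f : Set ℕ → Set ℕ := fun X => {n | ∃ γ, γ < α ∧ X ∈ Ub γ ∧ cA γ = n} with hf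
    have hfc : Continuous[ScottPN, ScottPN] f := by
      apply scott_continuous_of
      intro n
      have h : {X : Set ℕ | n ∈ f X} = ⋃ γ ∈ {γ : Ordinal | γ < α ∧ cA γ = n}, Ub γ := by
        ext X
        simp only [hf, Set.mem_setOf_eq, Set.mem_iUnion, exists_prop]
        tauto
      rw [h]
      exact isOpen_biUnion (fun γ _ => hUbopen γ)
    refine ⟨f, hfc, ?_⟩
    have hpre : ∀ β, β < α → f ⁻¹' (W β) = Ub β := by
      intro β hβ
      ext X
      simp only [Set.mem_preimage, hW, Set.mem_union]
      constructor
      · rintro (hXJ | hXV)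
        · rw [hJ] at hXJ
          obtain ⟨n, hn, hnc⟩ := hXJ
          rw [hf] at hn
          obtain ⟨δ, hδα, _, hδn⟩ := hn
          exact absurd hδn (hnc δ hδα)
        · rw [hV] at hXV
          obtain ⟨γ, hγβ, hγα, hγmem⟩ := hXV
          rw [hf] at hγmem
          obtain ⟨δ, hδα, hXδ, hδγ⟩ := hγmem
          have h7 : δ = γ := cA_inj hδα hγα hδγ
          subst h7
          obtain ⟨γ', h1', h2', h3'⟩ := hUbmem.mp hXδ
          exact hUbmem.mpr ⟨γ', h1'.trans hγβ, h2', h3'⟩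
      · intro hX
        right
        rw [hV]
        exact ⟨β, le_refl β, hβ, ⟨β, hβ, hX, rfl⟩⟩
    have hull : DOp α U = DOp α Ub := by
      ext x
      rw [mem_DOp, mem_DOp]
      constructor
      · rintro ⟨β, hβ, hp, hx, hlow⟩
        refine ⟨β, hβ, hp, hUbmem.mpr ⟨β, le_refl β, hβ, hx⟩, fun γ hγ hmem => ?_⟩
        obtain ⟨δ, hδγ, hδα, hδ⟩ := hUbmem.mp hmem
        exact hlow δ (lt_of_le_of_lt hδγ hγ) hδ
      · rintro ⟨β, hβ, hp, hx, hlow⟩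
        obtain ⟨δ, hδβ, hδα, hδ⟩ := hUbmem.mp hx
        rcases eq_or_lt_of_le hδβ with rfl | hlt
        · refine ⟨δ, hβ, hp, hδ, fun γ hγ hmem => ?_⟩
          exact hlow γ hγ (hUbmem.mpr ⟨γ, le_refl γ, hγ.trans hβ, hmem⟩)
        · exact absurd (hUbmem.mpr ⟨δ, le_refl δ, hδα, hδ⟩) (hlow δ hlt)
    calc DOp α U = DOp α Ub := hull
      _ = DOp α (fun β => f ⁻¹' (W β)) := DOp_congr (fun β hβ => (hpre β hβ).symm)
      _ = f ⁻¹' (DOp α W) := (preimage_DOp f α W).symm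
  · -- the obstruction
    rintro ⟨f, hfc, hfi, hfeq⟩
    have hAH : ∀ Y : Set ℕ, Y ∈ DOp α V ↔ f Y ∈ DOp α W := by
      intro Y
      rw [Set.ext_iff] at hfeq
      exact (hfeq Y).trans (Set.mem_preimage)
    have hup : ∀ (β : Ordinal) (X Y : Set ℕ), X ∈ W β → X ⊆ Y → Y ∈ W β :=
      fun β X Y hX hXY => scott_upClosed (hWopen β) hX hXY
    have memA_iff : ∀ (Y : Set ℕ) (η : Ordinal), η < α → cA η ∈ Y →
        (∀ γ, γ < α → cA γ ∈ Y → η ≤ γ) → (Y ∈ DOp α V ↔ ¬ SameParity η α) := by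
      intro Y η hηα hcY hmin
      apply DOp_layer hηα
      · rw [hV]; exact ⟨η, le_refl η, hηα, hcY⟩
      · intro γ hγη hmem
        rw [hV] at hmem
        obtain ⟨δ, hδγ, hδα, hδY⟩ := hmem
        exact absurd (hmin δ hδα hδY) (not_le.mpr (lt_of_le_of_lt hδγ hγη))
    -- the key claim
    have KEY : ∀ η : Ordinal, η < α → ∀ Y : Set ℕ, cA η ∈ Y →
        (∀ γ, γ < α → cA γ ∈ Y → η ≤ γ) → ∀ β, β < η → f Y ∉ W β := by
      intro η
      induction η using Ordinal.induction with
      | h η IH =>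
      intro hηα Y hcY hmin β
      induction β using Ordinal.induction with
      | h β IHβ =>
      intro hβη hmem
      have hble : β + 1 ≤ η := by
        rw [Ordinal.add_one_eq_succ]
        exact Order.succ_le_of_lt hβη
      have hβα : β < α := hβη.trans hηα
      have hβsucc : β < β + 1 := by
        rw [Ordinal.add_one_eq_succ]
        exact Order.lt_succ β
      rcases lt_or_eq_of_le hble with hlt | heq
      · -- β + 1 < η : push one more code into Y
        have hβ1α : β + 1 < α := hlt.trans hηα
        have h1 : cA (β + 1) ∈ insert (cA (β + 1)) Y := Set.mem_insert _ _
        have h2 : ∀ γ, γ < α → cA γ ∈ insert (cA (β + 1)) Y → β + 1 ≤ γ := by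
          intro γ hγ hγY'
          rcases Set.mem_insert_iff.mp hγY' with heq2 | hin
          · exact le_of_eq (cA_inj hβ1α hγ heq2.symm)
          · exact hlt.le.trans (hmin γ hγ hin)
        have h3 := IH (β + 1) hlt hβ1α (insert (cA (β + 1)) Y) h1 h2 β hβsucc
        exact h3 (hup β _ _ hmem (scott_mono hfc (Set.subset_insert _ _)))
      · -- β + 1 = η : parity contradiction
        have hlayer : f Y ∈ DOp α W ↔ ¬ SameParity β α :=
          DOp_layer hβα hmem (fun γ hγ => IHβ γ hγ (hγ.trans hβη))
        have hA := memA_iff Y η hηα hcY hmin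
        rw [← heq] at hA
        have hmemiff := hAH Y
        have hflip := parity_flip β
        simp only [SameParity] at hlayer hA
        tauto
    -- no code-free set can be sent into any level
    have FIN : ∀ X : Set ℕ, (∀ γ, γ < α → cA γ ∉ X) → ∀ β, β < α → f X ∉ W β := by
      intro X hXfree β
      induction β using Ordinal.induction with
      | h β IHβ =>
      intro hβα hmem
      have hble : β + 1 ≤ α := by
        rw [Ordinal.add_one_eq_succ]
        exact Order.succ_le_of_lt hβα
      have hβsucc : β < β + 1 := by
        rw [Ordinal.add_one_eq_succ]
        exact Order.lt_succ β
      rcases lt_or_eq_of_le hble with hlt | heq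
      · have h1 : cA (β + 1) ∈ insert (cA (β + 1)) X := Set.mem_insert _ _
        have h2 : ∀ γ, γ < α → cA γ ∈ insert (cA (β + 1)) X → β + 1 ≤ γ := by
          intro γ hγ hγY'
          rcases Set.mem_insert_iff.mp hγY' with heq2 | hin
          · exact le_of_eq (cA_inj hlt hγ heq2.symm)
          · exact absurd hin (hXfree γ hγ)
        have h3 := KEY (β + 1) hlt (insert (cA (β + 1)) X) h1 h2 β hβsucc
        exact h3 (hup β _ _ hmem (scott_mono hfc (Set.subset_insert _ _)))
      · -- β + 1 = α
        have hlayer : f X ∈ DOp α W ↔ ¬ SameParity β α :=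
          DOp_layer hβα hmem (fun γ hγ => IHβ γ hγ (hγ.trans hβα))
        have hXA : X ∉ DOp α V := by
          intro hx
          rw [mem_DOp] at hx
          obtain ⟨β', _, _, hmem', _⟩ := hx
          rw [hV] at hmem'
          obtain ⟨δ, _, hδα, hδX⟩ := hmem'
          exact hXfree δ hδα hδX
        have hnH : f X ∉ DOp α W := fun h => hXA ((hAH X).mpr h)
        have hflip := parity_flip β
        rw [← heq] at hlayer hnH hXA
        simp only [SameParity] at hlayer
        tauto
    -- hence all code-free sets are mapped to the empty set
    have hzero : ∀ X : Set ℕ, (∀ γ, γ < α → cA γ ∉ X) → f X = ∅ := by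
      intro X hfree
      ext n
      simp only [Set.mem_empty_iff_false, iff_false]
      intro hn
      by_cases hc : ∃ γ, γ < α ∧ cA γ = n
      · obtain ⟨γ, hγ, rfl⟩ := hc
        apply FIN X hfree γ hγ
        rw [hW]
        right
        rw [hV]
        exact ⟨γ, le_refl γ, hγ, hn⟩
      · apply FIN X hfree 0 hα0
        rw [hW]
        left
        rw [hJ]
        push_neg at hc
        exact ⟨n, hn, fun γ hγ => hc γ hγ⟩
    have h1z : f ∅ = ∅ := hzero ∅ (by simp)
    have h2z : f {0} = ∅ := by
      apply hzero
      intro γ hγ h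
      have := cA_odd hγ
      simp only [Set.mem_singleton_iff] at h
      omega
    have hcontra : (∅ : Set ℕ) = {0} := hfi (h1z.trans h2z.symm)
    have : (0 : ℕ) ∈ (∅ : Set ℕ) := hcontra ▸ Set.mem_singleton 0
    exact this
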